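/- Fix a > 0 and α ∈ (0,1). The function Φ_{a,α}(t) = exp(-a·(-t)^α), defined for t < 0, has all derivatives nonnegative on (-∞,0), i.e. Φ_{a,α} is absolutely monotonic on the negative half-axis. -/

import Mathlib

private lemma hasDerivAt_neg_rpow (β t : ℝ) (ht : t < 0) :
    HasDerivAt (fun s : ℝ => (-s) ^ β) (-(β * (-t) ^ (β - 1))) t := by
  have h1 : HasDerivAt (fun s : ℝ => -s) (-1) t := (hasDerivAt_id t).neg
  have h2 : HasDerivAt (fun s : ℝ => (-s) ^ β) (β * (-t) ^ (β - 1) * -1) t := (Real.hasDerivAt_rpow_const (x := -t) (p := β)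
    (Or.inl (by linarith : (-t : ℝ) ≠ 0))).comp t h1
  convert h2 using 1
  ring

private lemma key (a α : ℝ) (ha : 0 < a) (hα0 : 0 < α) (hα1 : α < 1) (k : ℕ) :
    ∃ c : ℕ → ℝ, (∀ j, 0 ≤ c j) ∧ (∀ j, k < j → c j = 0) ∧
      ∀ t : ℝ, t < 0 →
        iteratedDeriv k (fun s : ℝ => Real.exp (-a * (-s) ^ α)) t
          = (∑ j ∈ Finset.range (k + 1), c j * (-t) ^ ((j : ℝ) * α - k))
              * Real.exp (-a * (-t) ^ α) := by
  induction k with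
  | zero =>
    refine ⟨fun j => if j = 0 then 1 else 0, ?_, ?_, ?_⟩
    · intro j; dsimp only; split <;> norm_num
    · intro j hj
      have : j ≠ 0 := by omega
      simp [this]
    · intro t ht
      simp [iteratedDeriv_zero]
  | succ k ih =>
    obtain ⟨c, hc0, hcz, hform⟩ := ih
    refine ⟨fun j => c j * ((k : ℝ) - j * α) + a * α * (if j = 0 then 0 else c (j - 1)),
      ?_, ?_, ?_⟩
    · intro j
      dsimp only
      rcases le_or_gt j k with hj | hj
      · have h1 : (j : ℝ) * α ≤ k := by
          calc (j : ℝ) * α ≤ j * 1 := by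
                have : (0:ℝ) ≤ j := Nat.cast_nonneg j
                nlinarith
            _ ≤ k := by exact_mod_cast by simpa using hj
        have h2 : 0 ≤ c j * ((k : ℝ) - j * α) := mul_nonneg (hc0 j) (by linarith)
        have h3 : 0 ≤ a * α * (if j = 0 then 0 else c (j - 1)) := by
          apply mul_nonneg (by positivity)
          split <;> [norm_num; exact hc0 _]
        linarith
      · rw [hcz j hj]
        simp only [zero_mul, zero_add]
        apply mul_nonneg (by positivity)
        split <;> [norm_num; exact hc0 _]
    · intro j hj
      have h1 : c j = 0 := hcz j (by omega)
      have h2 : j ≠ 0 := by omega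
      have h3 : c (j - 1) = 0 := hcz _ (by omega)
      simp [h1, h2, h3]
    · intro t ht
      have hx : (0:ℝ) < -t := by linarith
      set Φ : ℝ → ℝ := fun s => Real.exp (-a * (-s) ^ α) with hΦdef
      set F : ℝ → ℝ := fun s =>
        (∑ j ∈ Finset.range (k + 1), c j * (-s) ^ ((j : ℝ) * α - k)) * Φ s with hFdef
      -- derivative of Φ
      have hΦ' : HasDerivAt Φ (Φ t * (a * α * (-t) ^ (α - 1))) t := by
        have h := (hasDerivAt_neg_rpow α t ht).const_mul (-a)
        have h2 := h.exp
        convert h2 using 1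
        simp [hΦdef]
        ring
      -- derivative of the sum
      have hS' : HasDerivAt
          (fun s => ∑ j ∈ Finset.range (k + 1), c j * (-s) ^ ((j : ℝ) * α - k))
          (∑ j ∈ Finset.range (k + 1),
            c j * (((k : ℝ) - j * α) * (-t) ^ ((j : ℝ) * α - (k + 1)))) t := by
        apply HasDerivAt.fun_sum
        intro j _
        have h : HasDerivAt (fun y : ℝ => c j * (-y) ^ ((j : ℝ) * α - k)) (c j * -(((j : ℝ) * α - k) * (-t) ^ ((j : ℝ) * α - k - 1))) t := (hasDerivAt_neg_rpow ((j : ℝ) * α - k) t ht).const_mul (c j)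
        refine h.congr_deriv ?_
        have : (j : ℝ) * α - k - 1 = (j : ℝ) * α - (k + 1) := by ring
        rw [this]
        ring
      have hF' : HasDerivAt F
          ((∑ j ∈ Finset.range (k + 1),
              c j * (((k : ℝ) - j * α) * (-t) ^ ((j : ℝ) * α - (k + 1)))) * Φ t
            + (∑ j ∈ Finset.range (k + 1), c j * (-t) ^ ((j : ℝ) * α - k))
              * (Φ t * (a * α * (-t) ^ (α - 1)))) t := hS'.mul hΦ'
      -- identify the iterated derivative with F near t
      have hev : iteratedDeriv k Φ =ᶠ[nhds t] F := by
        filter_upwards [Iio_mem_nhds ht] with s hs using hform s hs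
      have hd : iteratedDeriv (k + 1) Φ t = deriv F t := by
        rw [iteratedDeriv_succ]
        exact Filter.EventuallyEq.deriv_eq hev
      rw [hd, hF'.deriv]
      -- now algebra
      have hsum :
          (∑ j ∈ Finset.range (k + 1 + 1),
            (c j * ((k : ℝ) - j * α) + a * α * (if j = 0 then 0 else c (j - 1)))
              * (-t) ^ ((j : ℝ) * α - (k + 1)))
          = (∑ j ∈ Finset.range (k + 1),
              c j * (((k : ℝ) - j * α) * (-t) ^ ((j : ℝ) * α - (k + 1))))
            + (∑ j ∈ Finset.range (k + 1),
                c j * (-t) ^ ((j : ℝ) * α - k)) * (a * α * (-t) ^ (α - 1)) := by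
        rw [Finset.sum_congr rfl (fun j _ => by ring :
          ∀ j ∈ Finset.range (k + 1 + 1),
            (c j * ((k : ℝ) - j * α) + a * α * (if j = 0 then 0 else c (j - 1)))
              * (-t) ^ ((j : ℝ) * α - (k + 1))
            = c j * (((k : ℝ) - j * α) * (-t) ^ ((j : ℝ) * α - (k + 1)))
              + a * α * ((if j = 0 then 0 else c (j - 1)) * (-t) ^ ((j : ℝ) * α - (k + 1)))),
          Finset.sum_add_distrib]
        congr 1
        · rw [Finset.sum_range_succ, hcz (k + 1) (by omega)]
          simp
        · rw [← Finset.mul_sum, Finset.sum_range_succ']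
          simp only [Nat.add_sub_cancel, Nat.succ_ne_zero, if_false, reduceIte,
            zero_mul, add_zero]
          rw [Finset.mul_sum, Finset.sum_mul]
          apply Finset.sum_congr rfl
          intro j hj
          have hexp : ((j : ℝ) + 1) * α - (k + 1) = ((j : ℝ) * α - k) + (α - 1) := by ring
          have : (((j : ℕ) + 1 : ℕ) : ℝ) * α - (k + 1) = ((j : ℝ) + 1) * α - (k + 1) := by
            push_cast; ring
          rw [this, hexp, Real.rpow_add hx]
          ring
      have hgoal := hsum
      push_cast at hgoal ⊢
      rw [hgoal]
      ring

/-- For `a > 0`, `0 < α < 1`, the function `Φ(t) = exp(-a(-t)^α)` is absolutely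
monotonic on `(-∞,0)`: all its derivatives are nonnegative there. -/
theorem stmt_4 (a α : ℝ) (ha : 0 < a) (hα : α ∈ Set.Ioo (0 : ℝ) 1) :
    ∀ k : ℕ, ∀ t : ℝ, t < 0 →
      0 ≤ iteratedDeriv k (fun s : ℝ => Real.exp (-a * (-s) ^ α)) t := by
  intro k t ht
  obtain ⟨c, hc0, _, hform⟩ := key a α ha hα.1 hα.2 k
  rw [hform t ht]
  apply mul_nonneg _ (Real.exp_pos _).le
  apply Finset.sum_nonneg
  intro j _
  exact mul_nonneg (hc0 j) (Real.rpow_nonneg (by linarith) _)
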